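/- In the free group F = ⟨a, b⟩ with S = {a^{±1}, b^{±1}}, for all m, k ≥ 0 one has ‖(a^m b a^{-m})^k (b^{-1})^k‖_S = 2·min{m, k}; consequently the stable length lim_k ‖(a^m b a^{-m})^k b^{-k}‖_S / k equals 0. -/

import Mathlib

noncomputable def cinorm {G : Type*} [Group G] (S : Set G) (g : G) : ℕ :=
  sInf {ℓ : ℕ | ∃ f : Fin ℓ → G,
    (∀ i, ∃ h s, s ∈ S ∧ f i = h * s * h⁻¹) ∧ (List.ofFn f).prod = g}

open FreeGroup List

abbrev X := Bool × Bool

inductive M : List X → ℕ → Prop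
  | nil : M [] 0
  | cons (x : X) {L : List X} {n : ℕ} : M L n → M (x :: L) (n+1)
  | pair (g b : Bool) {A B : List X} {p q : ℕ} : M A p → M B q →
      M ((g, b) :: (A ++ (g, !b) :: B)) (p + q)

theorem M.append : ∀ {A p}, M A p → ∀ {B q}, M B q → M (A ++ B) (p + q) := by
  intro A p hA
  induction hA with
  | nil => intro B q hB; simpa using hB
  | cons x h ih =>
      intro B q hB
      have := M.cons x (ih hB)
      simpa [Nat.add_right_comm] using this
  | pair g b hA' hB' ihA ihB =>
      intro B q hB
      have := M.pair g b hA' (ihB hB)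
      simpa [Nat.add_assoc] using this

theorem M.single (x : X) : M [x] 1 := M.cons x M.nil

lemma invRev_cons (x : X) (L : List X) :
    FreeGroup.invRev (x :: L) = FreeGroup.invRev L ++ [(x.1, !x.2)] := by
  simp [FreeGroup.invRev]

theorem M.invRev : ∀ {L n}, M L n → M (FreeGroup.invRev L) n := by
  intro L n h
  induction h with
  | nil => simpa [FreeGroup.invRev] using M.nil
  | cons x h ih =>
      rw [_root_.invRev_cons]
      simpa using ih.append (M.single (x.1, !x.2))
  | pair g b hA hB ihA ihB =>
      rename_i A B p q
      have e : FreeGroup.invRev ((g, b) :: (A ++ (g, !b) :: B)) =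
          FreeGroup.invRev B ++ ((g, b) :: (FreeGroup.invRev A ++ (g, !b) :: [])) := by
        simp [FreeGroup.invRev]
      rw [e]
      have := ihB.append (M.pair g b ihA M.nil)
      simpa [Nat.add_comm] using this

theorem M.cons_cases {x : X} {K : List X} {n : ℕ} (h : M (x :: K) n) :
    (∃ n', n = n' + 1 ∧ M K n') ∨
    (∃ A B p q, K = A ++ (x.1, !x.2) :: B ∧ M A p ∧ M B q ∧ n = p + q) := by
  obtain ⟨x1, x2⟩ := x
  cases h with
  | cons x h3 => exact Or.inl ⟨_, rfl, h3⟩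
  | pair g b hA hB => exact Or.inr ⟨_, _, _, _, rfl, hA, hB, rfl⟩

theorem M.snoc_cases {L : List X} {y : X} {n : ℕ} (h : M (L ++ [y]) n) :
    (∃ n', n = n' + 1 ∧ M L n') ∨
    (∃ C D p q, L = C ++ (y.1, !y.2) :: D ∧ M C p ∧ M D q ∧ n = p + q) := by
  have h2 := h.invRev
  have e : FreeGroup.invRev (L ++ [y]) = (y.1, !y.2) :: FreeGroup.invRev L := by
    simp [FreeGroup.invRev]
  rw [e] at h2
  rcases h2.cons_cases with ⟨n', rfl, h3⟩ | ⟨A, B, p, q, hK, hA, hB, rfl⟩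
  · left
    refine ⟨n', rfl, ?_⟩
    have := h3.invRev
    rwa [FreeGroup.invRev_invRev] at this
  · right
    refine ⟨FreeGroup.invRev B, FreeGroup.invRev A, q, p, ?_, hB.invRev, hA.invRev, Nat.add_comm p q⟩
    have : L = FreeGroup.invRev (A ++ ((y.1, !y.2).1, !(y.1, !y.2).2) :: B) := by
      rw [← hK, FreeGroup.invRev_invRev]
    rw [this]
    simp [FreeGroup.invRev]

theorem M.delete : ∀ {W n}, M W n →
    ∀ {P Q : List X} {x : Bool} {b : Bool}, W = P ++ (x, b) :: (x, !b) :: Q →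
      ∃ n' ≤ n, M (P ++ Q) n' := by
  intro W n h
  induction h with
  | nil =>
      intro P Q x b hW
      exact absurd hW (by simp)
  | cons y h ih =>
      rename_i L n0
      intro P Q x b hW
      cases P with
      | nil =>
          simp only [List.nil_append, List.cons.injEq] at hW
          obtain ⟨rfl, rfl⟩ := hW
          rcases h.cons_cases with ⟨n1, rfl, hQ⟩ | ⟨A, B, p, q, hQeq, hA, hB, rfl⟩
          · exact ⟨n1, by omega, hQ⟩
          · simp only [Bool.not_not] at hQeq
            subst hQeq
            exact ⟨p + (q + 1), by omega, hA.append (M.cons _ hB)⟩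
      | cons z P' =>
          simp only [List.cons_append, List.cons.injEq] at hW
          obtain ⟨rfl, hL⟩ := hW
          obtain ⟨n', hn', hM⟩ := ih hL
          exact ⟨n' + 1, by omega, M.cons y hM⟩
  | pair g c hA hB ihA ihB =>
      rename_i A B p q
      intro P Q x b hW
      cases P with
      | nil =>
          simp only [List.nil_append, List.cons.injEq] at hW
          obtain ⟨⟨rfl, rfl⟩, hW2⟩ := hW
          cases A with
          | nil =>
              simp only [List.nil_append, List.cons.injEq] at hW2
              obtain ⟨-, rfl⟩ := hW2
              exact ⟨q, by omega, hB⟩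
          | cons a1 A' =>
              simp only [List.cons_append, List.cons.injEq] at hW2
              obtain ⟨rfl, hQ⟩ := hW2
              subst hQ
              rcases hA.cons_cases with ⟨p1, rfl, hA'⟩ | ⟨C, D, pc, pd, hAeq, hC, hD, rfl⟩
              · exact ⟨p1 + (q + 1), by omega, hA'.append (M.cons _ hB)⟩
              · simp only [Bool.not_not] at hAeq
                subst hAeq
                have key := hC.append (M.pair g c hD hB)
                exact ⟨pc + (pd + q), by omega, by
                  simpa [List.append_assoc] using key⟩
      | cons z P' =>
          simp only [List.cons_append, List.cons.injEq] at hW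
          obtain ⟨rfl, hL⟩ := hW
          rw [List.append_eq_append_iff] at hL
          rcases hL with ⟨u, hP', hu⟩ | ⟨v, hA2, hv⟩
          · cases u with
            | nil =>
                simp only [List.append_nil] at hP'
                subst hP'
                simp only [List.nil_append, List.cons.injEq] at hu
                obtain ⟨⟨rfl, rfl⟩, hB2⟩ := hu
                simp only [Bool.not_not] at hB2
                subst hB2
                rcases hB.cons_cases with ⟨q1, rfl, hQ⟩ | ⟨C, D, qc, qd, hQeq, hC, hD, rfl⟩
                · exact ⟨p + q1 + 1, by omega, by
                    simpa using M.cons (g, c) (hA.append hQ)⟩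
                · simp only at hQeq
                  subst hQeq
                  have key := M.pair g c (hA.append hC) hD
                  exact ⟨(p + qc) + qd, by omega, by
                    simpa [List.append_assoc] using key⟩
            | cons w1 u' =>
                simp only [List.cons_append, List.cons.injEq] at hu
                obtain ⟨rfl, hB2⟩ := hu
                obtain ⟨q', hq', hM⟩ := ihB hB2
                subst hP'
                have key := M.pair g c hA hM
                exact ⟨p + q', by omega, by
                  simpa [List.append_assoc] using key⟩
          · cases v with
            | nil =>
                simp only [List.append_nil] at hA2
                subst hA2
                simp only [List.nil_append, List.cons.injEq] at hv
                obtain ⟨⟨rfl, rfl⟩, hB2⟩ := hv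
                simp only [Bool.not_not] at hB2
                rw [← hB2] at hB
                rcases hB.cons_cases with ⟨q1, rfl, hQ⟩ | ⟨C, D, qc, qd, hQeq, hC, hD, rfl⟩
                · exact ⟨p + q1 + 1, by omega, by
                    simpa using M.cons (g, c) (hA.append hQ)⟩
                · simp only at hQeq
                  subst hQeq
                  have key := M.pair g c (hA.append hC) hD
                  exact ⟨(p + qc) + qd, by omega, by
                    simpa [List.append_assoc] using key⟩
            | cons v1 v' =>
                cases v' with
                | nil =>
                    simp only [List.cons_append, List.nil_append, List.cons.injEq] at hv
                    obtain ⟨hv1, hv2, hv3⟩ := hv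
                    have hx : x = g := congrArg Prod.fst hv2
                    have hbc : (!b) = (!c) := congrArg Prod.snd hv2
                    have hbc2 : b = c := Bool.not_inj hbc
                    subst hx hbc2 hv3
                    subst hv1
                    rw [hA2] at hA
                    rcases hA.snoc_cases with ⟨p1, rfl, hP'⟩ | ⟨C, D, pc, pd, hPeq, hC, hD, rfl⟩
                    · exact ⟨p1 + q + 1, by omega, by
                        simpa using M.cons (x, b) (hP'.append hB)⟩
                    · simp only at hPeq
                      subst hPeq
                      have key := M.pair x b hC (hD.append hB)
                      exact ⟨pc + (pd + q), by omega, by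
                        simpa [List.append_assoc] using key⟩
                | cons v2 v'' =>
                    simp only [List.cons_append, List.cons.injEq] at hv
                    obtain ⟨rfl, rfl, hQ2⟩ := hv
                    subst hA2
                    obtain ⟨p', hp', hM⟩ := ihA rfl
                    subst hQ2
                    have key := M.pair g c hM hB
                    exact ⟨p' + q, by omega, by
                      simpa [List.append_assoc] using key⟩

theorem M.red : ∀ {L L' : List X}, FreeGroup.Red L L' → ∀ {n}, M L n → ∃ n' ≤ n, M L' n' := by
  intro L L' h
  induction h with
  | refl => exact fun {n} h => ⟨n, le_refl n, h⟩
  | tail _ s ih =>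
      intro n hM
      obtain ⟨n1, hn1, h1⟩ := ih hM
      cases s with
      | @not L1 L2 x b =>
          obtain ⟨n2, hn2, h2⟩ := h1.delete rfl
          exact ⟨n2, le_trans hn2 hn1, h2⟩

def wd (m1 k1 m2 k2 : ℕ) : List X :=
  List.replicate m1 (true, true) ++ List.replicate k1 (false, true) ++
    List.replicate m2 (true, false) ++ List.replicate k2 (false, false)

lemma split_pre : ∀ {P Mid A B : List X} {x : X}, x ∉ P → P ++ Mid = A ++ x :: B →
    ∃ A', A = P ++ A' ∧ Mid = A' ++ x :: B := by
  intro P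
  induction P with
  | nil => exact fun _ h => ⟨_, rfl, h⟩
  | cons y P' ih =>
      intro Mid A B x hx h
      cases A with
      | nil =>
          simp only [List.cons_append, List.nil_append, List.cons.injEq] at h
          exact absurd (h.1 ▸ List.mem_cons_self (a := y) (l := P')) (h.1 ▸ hx)
      | cons a A'' =>
          simp only [List.cons_append, List.cons.injEq] at h
          obtain ⟨rfl, h2⟩ := h
          obtain ⟨A', rfl, hMid⟩ := ih (fun hc => hx (List.mem_cons_of_mem _ hc)) h2
          exact ⟨A', by simp, hMid⟩

lemma split_rep : ∀ {t : ℕ} {S A B : List X} {x : X}, x ∉ S →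
    List.replicate t x ++ S = A ++ x :: B →
    ∃ j, j + 1 ≤ t ∧ A = List.replicate j x ∧ B = List.replicate (t - (j+1)) x ++ S := by
  intro t S A
  induction A generalizing t with
  | nil =>
      intro B x hx h
      cases t with
      | zero => simp only [List.replicate, List.nil_append] at h; exact absurd (h ▸ List.mem_cons_self (a := x) (l := B)) hx
      | succ t' =>
          simp only [List.replicate_succ, List.cons_append, List.nil_append, List.cons.injEq] at h
          exact ⟨0, by omega, rfl, by simpa using h.2.symm⟩
  | cons a A' ih =>
      intro B x hx h
      cases t with
      | zero =>
          simp only [List.replicate, List.nil_append] at h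
          exact absurd (by rw [h]; simp) hx
      | succ t' =>
          simp only [List.replicate_succ, List.cons_append, List.cons.injEq] at h
          obtain ⟨rfl, h2⟩ := h
          obtain ⟨j, hj, rfl, hB⟩ := ih hx h2
          refine ⟨j + 1, by omega, by simp [List.replicate_succ], ?_⟩
          rw [hB]
          congr 1
          congr 1
          omega

lemma cons_wd {x : X} {L : List X} {m1 k1 m2 k2 : ℕ} (h : x :: L = wd m1 k1 m2 k2) :
    (∃ m1', m1 = m1' + 1 ∧ x = (true, true) ∧ L = wd m1' k1 m2 k2) ∨
    (m1 = 0 ∧ ∃ k1', k1 = k1' + 1 ∧ x = (false, true) ∧ L = wd 0 k1' m2 k2) ∨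
    (m1 = 0 ∧ k1 = 0 ∧ ∃ m2', m2 = m2' + 1 ∧ x = (true, false) ∧ L = wd 0 0 m2' k2) ∨
    (m1 = 0 ∧ k1 = 0 ∧ m2 = 0 ∧ ∃ k2', k2 = k2' + 1 ∧ x = (false, false) ∧ L = wd 0 0 0 k2') := by
  cases m1 with
  | succ m1' =>
      left
      refine ⟨m1', rfl, ?_, ?_⟩ <;>
        · simp only [wd, List.replicate_succ, List.cons_append, List.cons.injEq] at h
          simp [wd, h.1, h.2]
  | zero =>
  cases k1 with
  | succ k1' =>
      right; left
      refine ⟨rfl, k1', rfl, ?_, ?_⟩ <;>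
        · simp only [wd, List.replicate, List.replicate_succ, List.nil_append,
            List.cons_append, List.cons.injEq] at h
          simp [wd, h.1, h.2]
  | zero =>
  cases m2 with
  | succ m2' =>
      right; right; left
      refine ⟨rfl, rfl, m2', rfl, ?_, ?_⟩ <;>
        · simp only [wd, List.replicate, List.replicate_succ, List.nil_append,
            List.cons_append, List.cons.injEq] at h
          simp [wd, h.1, h.2]
  | zero =>
  cases k2 with
  | succ k2' =>
      right; right; right
      refine ⟨rfl, rfl, rfl, k2', rfl, ?_, ?_⟩ <;>
        · simp only [wd, List.replicate, List.replicate_succ, List.nil_append,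
            List.cons_append, List.cons.injEq] at h
          simp [wd, h.1, h.2]
  | zero =>
      simp [wd, List.replicate] at h

theorem M.key : ∀ {L n}, M L n → ∀ {m1 k1 m2 k2 : ℕ}, L = wd m1 k1 m2 k2 →
    m1 + k1 + m2 + k2 ≤ n + 2 * max (min m1 m2) (min k1 k2) := by
  intro L n h
  induction h with
  | nil =>
      intro m1 k1 m2 k2 hW
      have := congrArg List.length hW
      simp [wd] at this
      omega
  | cons x h ih =>
      intro m1 k1 m2 k2 hW
      rcases cons_wd hW with ⟨m1', rfl, -, hL⟩ | ⟨rfl, k1', rfl, -, hL⟩ |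
        ⟨rfl, rfl, m2', rfl, -, hL⟩ | ⟨rfl, rfl, rfl, k2', rfl, -, hL⟩ <;>
      · have := ih hL
        omega
  | pair g c hA hB ihA ihB =>
      rename_i A B p q
      intro m1 k1 m2 k2 hW
      rcases cons_wd hW with ⟨m1', rfl, hx, hL⟩ | ⟨rfl, k1', rfl, hx, hL⟩ |
        ⟨rfl, rfl, m2', rfl, hx, hL⟩ | ⟨rfl, rfl, rfl, k2', rfl, hx, hL⟩
      · -- head is a
        have hg : g = true := congrArg Prod.fst hx
        have hc : c = true := congrArg Prod.snd hx
        subst hg hc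
        rw [wd, List.append_assoc, List.append_assoc] at hL
        obtain ⟨A1, rfl, h1⟩ := split_pre (by simp [List.mem_replicate]) hL.symm
        obtain ⟨A2, rfl, h2⟩ := split_pre (by simp [List.mem_replicate]) h1
        obtain ⟨j, hj, rfl, rfl⟩ := split_rep (by simp [List.mem_replicate]) h2
        have e1 : List.replicate m1' ((true : Bool), (true : Bool)) ++
            (List.replicate k1 ((false : Bool), (true : Bool)) ++
              List.replicate j ((true : Bool), (false : Bool))) = wd m1' k1 j 0 := by
          simp [wd]
        have e2 : List.replicate (m2 - (j+1)) ((true : Bool), (false : Bool)) ++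
            List.replicate k2 ((false : Bool), (false : Bool)) = wd 0 0 (m2 - (j+1)) k2 := by
          simp [wd]
        have i1 := ihA e1
        have i2 := ihB e2
        omega
      · -- head is b
        have hg : g = false := congrArg Prod.fst hx
        have hc : c = true := congrArg Prod.snd hx
        subst hg hc
        rw [wd] at hL
        rw [show List.replicate 0 ((true:Bool),(true:Bool)) = ([] : List X) from rfl] at hL
        rw [List.nil_append, List.append_assoc] at hL
        obtain ⟨A1, rfl, h1⟩ := split_pre (by simp [List.mem_replicate]) hL.symm
        obtain ⟨A2, rfl, h2⟩ := split_pre (by simp [List.mem_replicate]) h1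
        rw [← List.append_nil (List.replicate k2 ((false:Bool),(false:Bool)))] at h2
        obtain ⟨j, hj, rfl, rfl⟩ := split_rep (by simp) h2
        have e1 : List.replicate k1' ((false : Bool), (true : Bool)) ++
            (List.replicate m2 ((true : Bool), (false : Bool)) ++
              List.replicate j ((false : Bool), (false : Bool))) = wd 0 k1' m2 j := by
          simp [wd]
        have e2 : List.replicate (k2 - (j+1)) ((false : Bool), (false : Bool)) ++ ([] : List X)
            = wd 0 0 0 (k2 - (j+1)) := by
          simp [wd]
        have i1 := ihA e1
        have i2 := ihB e2
        omega
      · -- head is a⁻¹ : impossible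
        have hg : g = true := congrArg Prod.fst hx
        have hc : c = false := congrArg Prod.snd hx
        subst hg hc
        have mem : ((true : Bool), !(false : Bool)) ∈ wd 0 0 m2' k2 := by
          rw [← hL]; simp
        simp [wd, List.mem_replicate] at mem
      · -- head is b⁻¹ : impossible
        have hg : g = false := congrArg Prod.fst hx
        have hc : c = false := congrArg Prod.snd hx
        subst hg hc
        have mem : ((false : Bool), !(false : Bool)) ∈ wd 0 0 0 k2' := by
          rw [← hL]; simp
        simp [wd, List.mem_replicate] at mem

def NC (a b : X) : Prop := ¬(a.1 = b.1 ∧ a.2 = !b.2)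

lemma reduce_of_chain : ∀ (L : List X), List.Chain' NC L → FreeGroup.reduce L = L := by
  intro L
  induction L with
  | nil => intro _; rfl
  | cons x L ih =>
      intro h
      cases L with
      | nil => rfl
      | cons y L' =>
          obtain ⟨hR, ht⟩ := List.isChain_cons_cons.mp h
          have := ih ht
          rw [FreeGroup.reduce.cons, this]
          simp only []
          rw [if_neg hR]

lemma chain'_rep (n : ℕ) (x : X) (h : NC x x) : List.Chain' NC (List.replicate n x) := by
  induction n with
  | zero => exact List.isChain_nil
  | succ n ih =>
      rw [List.replicate_succ]
      refine List.isChain_cons.mpr ?_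
      refine ⟨?_, ih⟩
      intro y hy
      cases n with
      | zero => simp at hy
      | succ n => rw [List.replicate_succ] at hy; simp at hy; subst hy; exact h

lemma getLast?_rep (n : ℕ) (x : X) (hn : n ≠ 0) : (List.replicate n x).getLast? = some x := by
  cases n with
  | zero => omega
  | succ n => rw [List.replicate_succ', List.getLast?_concat]

lemma head?_rep (n : ℕ) (x : X) (hn : n ≠ 0) : (List.replicate n x).head? = some x := by
  cases n with
  | zero => omega
  | succ n => rw [List.replicate_succ]; rfl

lemma head?_rep_app (n : ℕ) (x : X) (L : List X) (hn : n ≠ 0) :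
    (List.replicate n x ++ L).head? = some x := by
  cases n with
  | zero => omega
  | succ n => rw [List.replicate_succ]; rfl

lemma chain'_app {l1 l2 : List X} (h1 : List.Chain' NC l1) (h2 : List.Chain' NC l2)
    (h : ∀ x ∈ l1.getLast?, ∀ y ∈ l2.head?, NC x y) : List.Chain' NC (l1 ++ l2) :=
  List.isChain_append.mpr ⟨h1, h2, h⟩

lemma chain'_wd (m k : ℕ) (hm : m ≠ 0) (hk : k ≠ 0) : List.Chain' NC (wd m k m k) := by
  rw [wd, List.append_assoc, List.append_assoc]
  refine chain'_app (chain'_rep _ _ (by simp [NC])) ?_ ?_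
  · refine chain'_app (chain'_rep _ _ (by simp [NC])) ?_ ?_
    · refine chain'_app (chain'_rep _ _ (by simp [NC])) (chain'_rep _ _ (by simp [NC])) ?_
      rw [getLast?_rep _ _ hm, head?_rep _ _ hk]
      intro x hx y hy
      simp at hx hy
      subst hx; subst hy
      simp [NC]
    · rw [getLast?_rep _ _ hk, head?_rep_app _ _ _ hm]
      intro x hx y hy
      simp at hx hy
      subst hx; subst hy
      simp [NC]
  · rw [getLast?_rep _ _ hm]
    rw [head?_rep_app _ _ _ hk]
    intro x hx y hy
    simp at hx hy
    subst hx; subst hy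
    simp [NC]

lemma reduce_wd (m k : ℕ) (hm : m ≠ 0) (hk : k ≠ 0) :
    FreeGroup.reduce (wd m k m k) = wd m k m k :=
  reduce_of_chain _ (chain'_wd m k hm hk)

def Sgen : Set (FreeGroup Bool) :=
  {FreeGroup.of true, (FreeGroup.of true)⁻¹, FreeGroup.of false, (FreeGroup.of false)⁻¹}

lemma sgen_word {s : FreeGroup Bool} (hs : s ∈ Sgen) : ∃ y : X, s = FreeGroup.mk [y] := by
  rcases hs with h | h | h | h <;> subst h
  · exact ⟨(true, true), rfl⟩
  · exact ⟨(true, false), by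
      rw [show FreeGroup.of true = FreeGroup.mk [(true, true)] from rfl, FreeGroup.inv_mk]
      simp [FreeGroup.invRev]⟩
  · exact ⟨(false, true), rfl⟩
  · exact ⟨(false, false), by
      rw [show FreeGroup.of false = FreeGroup.mk [(false, true)] from rfl, FreeGroup.inv_mk]
      simp [FreeGroup.invRev]⟩

lemma conj_word : ∀ (H : List X) (y : X), M (H ++ y :: FreeGroup.invRev H) 1 := by
  intro H
  induction H with
  | nil => intro y; simpa [FreeGroup.invRev] using M.cons y M.nil
  | cons z H' ih =>
      intro y
      obtain ⟨z1, z2⟩ := z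
      have key := M.pair z1 z2 (ih y) M.nil
      have e : (z1, z2) :: ((H' ++ y :: FreeGroup.invRev H') ++ (z1, !z2) :: []) =
          (z1, z2) :: H' ++ y :: FreeGroup.invRev ((z1, z2) :: H') := by
        rw [_root_.invRev_cons]
        simp [List.append_assoc]
      rw [e] at key
      exact key

lemma list_to_M : ∀ l : List (FreeGroup Bool),
    (∀ x ∈ l, ∃ h s, s ∈ Sgen ∧ x = h * s * h⁻¹) →
    ∃ W, M W l.length ∧ FreeGroup.mk W = l.prod := by
  intro l
  induction l with
  | nil => exact fun _ => ⟨[], M.nil, by rw [List.prod_nil, FreeGroup.one_eq_mk]⟩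
  | cons x l ih =>
      intro hl
      obtain ⟨h, s, hS, hx⟩ := hl x (List.mem_cons_self (a := x) (l := l))
      obtain ⟨y, rfl⟩ := sgen_word hS
      obtain ⟨W', hW', hmk⟩ := ih fun z hz => hl z (List.mem_cons_of_mem _ hz)
      refine ⟨(FreeGroup.toWord h ++ y :: FreeGroup.invRev (FreeGroup.toWord h)) ++ W',
        ?_, ?_⟩
      · have := (conj_word (FreeGroup.toWord h) y).append hW'
        simpa [Nat.add_comm] using this
      · rw [← FreeGroup.mul_mk]
        rw [hmk, List.prod_cons, hx]
        congr 1
        have : FreeGroup.toWord h ++ y :: FreeGroup.invRev (FreeGroup.toWord h) =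
            (FreeGroup.toWord h ++ [y]) ++ FreeGroup.invRev (FreeGroup.toWord h) := by simp
        rw [this, ← FreeGroup.mul_mk, ← FreeGroup.mul_mk, FreeGroup.mk_toWord,
          ← FreeGroup.inv_mk, FreeGroup.mk_toWord]

lemma mk_rep (n : ℕ) (y : X) :
    FreeGroup.mk (List.replicate n y) = (FreeGroup.mk [y]) ^ n := by
  induction n with
  | zero => rw [pow_zero, FreeGroup.one_eq_mk]; rfl
  | succ n ih =>
      rw [List.replicate_succ, pow_succ', ← ih, FreeGroup.mul_mk]
      rfl

def Gel (m k : ℕ) : FreeGroup Bool :=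
  (FreeGroup.of true ^ m * FreeGroup.of false * (FreeGroup.of true)⁻¹ ^ m) ^ k *
    ((FreeGroup.of false)⁻¹) ^ k

def CSet (g : FreeGroup Bool) : Set ℕ :=
  {ℓ : ℕ | ∃ f : Fin ℓ → FreeGroup Bool,
    (∀ i, ∃ h s, s ∈ Sgen ∧ f i = h * s * h⁻¹) ∧ (List.ofFn f).prod = g}

lemma cinorm_eq (g : FreeGroup Bool) : cinorm Sgen g = sInf (CSet g) := rfl

lemma Gel_eq (m k : ℕ) : Gel m k =
    FreeGroup.of true ^ m * FreeGroup.of false ^ k * ((FreeGroup.of true)⁻¹) ^ m *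
      ((FreeGroup.of false)⁻¹) ^ k := by
  rw [Gel, inv_pow, conj_pow, inv_pow]

lemma mem_CSet_of_list (l : List (FreeGroup Bool)) (g : FreeGroup Bool)
    (hl : ∀ x ∈ l, ∃ h s, s ∈ Sgen ∧ x = h * s * h⁻¹) (hp : l.prod = g) :
    l.length ∈ CSet g := by
  refine ⟨l.get, fun i => hl _ (List.get_mem l i), ?_⟩
  rw [List.ofFn_get]; exact hp

-- upper bound members
lemma mem1 (m k : ℕ) : k + k ∈ CSet (Gel m k) := by
  have := mem_CSet_of_list
    (List.replicate k (FreeGroup.of true ^ m * FreeGroup.of false * (FreeGroup.of true ^ m)⁻¹) ++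
     List.replicate k ((FreeGroup.of false)⁻¹)) (Gel m k) ?_ ?_
  · simpa using this
  · intro x hx
    rcases List.mem_append.mp hx with h | h <;> rw [List.eq_of_mem_replicate h]
    · exact ⟨FreeGroup.of true ^ m, FreeGroup.of false, by simp [Sgen], rfl⟩
    · exact ⟨1, (FreeGroup.of false)⁻¹, by simp [Sgen], by simp⟩
  · rw [List.prod_append, List.prod_replicate, List.prod_replicate, Gel, inv_pow, inv_pow]

lemma mem2 (m k : ℕ) : m + m ∈ CSet (Gel m k) := by
  have := mem_CSet_of_list
    (List.replicate m (FreeGroup.of true) ++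
     List.replicate m (FreeGroup.of false ^ k * (FreeGroup.of true)⁻¹ * (FreeGroup.of false ^ k)⁻¹))
    (Gel m k) ?_ ?_
  · simpa using this
  · intro x hx
    rcases List.mem_append.mp hx with h | h <;> rw [List.eq_of_mem_replicate h]
    · exact ⟨1, FreeGroup.of true, by simp [Sgen], by simp⟩
    · exact ⟨FreeGroup.of false ^ k, (FreeGroup.of true)⁻¹, by simp [Sgen], rfl⟩
  · rw [List.prod_append, List.prod_replicate, List.prod_replicate, conj_pow, Gel_eq]
    rw [inv_pow]
    group


lemma inv_of_false : (FreeGroup.of false)⁻¹ = FreeGroup.mk [((false : Bool), false)] := by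
  rw [show FreeGroup.of false = FreeGroup.mk [(false, true)] from rfl, FreeGroup.inv_mk]
  simp [FreeGroup.invRev]

lemma inv_of_true : (FreeGroup.of true)⁻¹ = FreeGroup.mk [((true : Bool), false)] := by
  rw [show FreeGroup.of true = FreeGroup.mk [(true, true)] from rfl, FreeGroup.inv_mk]
  simp [FreeGroup.invRev]

lemma mk_wd (m k : ℕ) : FreeGroup.mk (wd m k m k) = Gel m k := by
  rw [wd, ← FreeGroup.mul_mk, ← FreeGroup.mul_mk, ← FreeGroup.mul_mk,
    mk_rep, mk_rep, mk_rep, mk_rep, Gel_eq]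
  rw [show FreeGroup.mk [((true : Bool), true)] = FreeGroup.of true from rfl,
    show FreeGroup.mk [((false : Bool), true)] = FreeGroup.of false from rfl,
    ← inv_of_true, ← inv_of_false]

lemma lower {m k ℓ : ℕ} (h : ℓ ∈ CSet (Gel m k)) : 2 * min m k ≤ ℓ := by
  rcases Nat.eq_zero_or_pos m with rfl | hm
  · simp
  rcases Nat.eq_zero_or_pos k with rfl | hk
  · simp
  obtain ⟨f, hf, hp⟩ := h
  have hl : ∀ x ∈ List.ofFn f, ∃ h s, s ∈ Sgen ∧ x = h * s * h⁻¹ := by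
    intro x hx
    obtain ⟨i, hi⟩ := (List.mem_ofFn (f := f) (a := x)).mp hx
    exact hi ▸ hf i
  obtain ⟨W, hW, hmk⟩ := list_to_M (List.ofFn f) hl
  rw [List.length_ofFn] at hW
  have hmk2 : FreeGroup.mk W = FreeGroup.mk (wd m k m k) := by
    rw [hmk, hp, mk_wd]
  have hred : FreeGroup.reduce W = wd m k m k := by
    rw [FreeGroup.reduce.sound hmk2, reduce_wd m k hm.ne' hk.ne']
  obtain ⟨n', hn', hMn⟩ := M.red FreeGroup.reduce.red hW
  rw [hred] at hMn
  have hkey := hMn.key rfl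
  omega

lemma main_eq (m k : ℕ) : cinorm Sgen (Gel m k) = 2 * min m k := by
  rw [cinorm_eq]
  apply _root_.le_antisymm
  · have h1 := Nat.sInf_le (mem1 m k)
    have h2 := Nat.sInf_le (mem2 m k)
    omega
  · exact lower (Nat.sInf_mem ⟨_, mem1 m k⟩)

theorem stmt_18 :
    (∀ m k : ℕ,
      cinorm ({FreeGroup.of true, (FreeGroup.of true)⁻¹,
               FreeGroup.of false, (FreeGroup.of false)⁻¹} : Set (FreeGroup Bool))
        ((FreeGroup.of true ^ m * FreeGroup.of false * (FreeGroup.of true)⁻¹ ^ m) ^ k *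
          ((FreeGroup.of false)⁻¹) ^ k)
        = 2 * min m k) ∧
    ∀ m : ℕ, Filter.Tendsto (fun k : ℕ =>
      ((cinorm ({FreeGroup.of true, (FreeGroup.of true)⁻¹,
               FreeGroup.of false, (FreeGroup.of false)⁻¹} : Set (FreeGroup Bool))
        ((FreeGroup.of true ^ m * FreeGroup.of false * (FreeGroup.of true)⁻¹ ^ m) ^ k *
          ((FreeGroup.of false)⁻¹) ^ k) : ℝ) / (k : ℝ)))
      Filter.atTop (nhds 0) := by
  have h1 : ∀ m k : ℕ,
      cinorm ({FreeGroup.of true, (FreeGroup.of true)⁻¹,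
               FreeGroup.of false, (FreeGroup.of false)⁻¹} : Set (FreeGroup Bool))
        ((FreeGroup.of true ^ m * FreeGroup.of false * (FreeGroup.of true)⁻¹ ^ m) ^ k *
          ((FreeGroup.of false)⁻¹) ^ k)
        = 2 * min m k := fun m k => main_eq m k
  refine ⟨h1, fun m => ?_⟩
  simp only [h1]
  refine tendsto_of_tendsto_of_tendsto_of_le_of_le tendsto_const_nhds
    (tendsto_const_div_atTop_nhds_zero_nat (𝕜 := ℝ) (2 * m)) ?_ ?_
  · intro k
    positivity
  · intro k
    beta_reduce
    rcases Nat.eq_zero_or_pos k with rfl | hk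
    · simp
    · rw [div_le_div_iff_of_pos_right (by exact_mod_cast hk)]
      exact_mod_cast Nat.mul_le_mul_left 2 (Nat.min_le_left m k)
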